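/- Let m, n, k ≥ 1 and let M denote the finite type of multi-indices of length k in Fin m → ℕ. Let Q ∈ MvPolynomial (Fin n × M) ℝ be homogeneous of degree 2 and suppose that for every α, β ∈ Fin n and every multi-index H with |H| = 2k, the sum over all pairs (J, K) ∈ M × M with J + K = H of pderiv (α,J) (pderiv (β,K) Q) equals 0. Then Q is a real linear combination of polynomials of the form X_{(α, I₁+𝒥₁)} · X_{(β, I₂+𝒥₂)} − X_{(α, I₁+𝒥₂)} · X_{(β, I₂+𝒥₁)}, where α, β ∈ Fin n, and I₁, I₂, 𝒥₁, 𝒥₂ are multi-indices with |I₁| = |I₂|, |𝒥₁| = |𝒥₂|, and |I₁| + |𝒥₁| = k. -/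

import Mathlib

set_option maxHeartbeats 1000000

open MvPolynomial

section AuxLemmas

variable {σ : Type*}

lemma aux_X_mul_pderiv_monomial [Fintype σ] (s : σ →₀ ℕ) (a : ℝ) (u : σ) :
    X u * pderiv u (monomial s a) = (s u) • monomial s a := by
  classical
  rw [pderiv_monomial]
  by_cases h : s u = 0
  · simp [h]
  · have hle : Finsupp.single u 1 ≤ s := by
      rw [Finsupp.single_le_iff]; omega
    rw [X, monomial_mul, one_mul, add_tsub_cancel_of_le hle, smul_monomial]
    congr 1
    push_cast
    ring

lemma aux_euler [Fintype σ] {p : MvPolynomial σ ℝ} {d : ℕ} (hp : p.IsHomogeneous d) :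
    ∑ u : σ, X u * pderiv u p = d • p := by
  classical
  calc ∑ u : σ, X u * pderiv u p
      = ∑ u : σ, ∑ s ∈ p.support, X u * pderiv u (monomial s (MvPolynomial.coeff s p)) := by
        refine Finset.sum_congr rfl fun u _ => ?_
        conv_lhs => rw [p.as_sum]
        rw [map_sum, Finset.mul_sum]
    _ = ∑ s ∈ p.support, ∑ u : σ, X u * pderiv u (monomial s (MvPolynomial.coeff s p)) :=
        Finset.sum_comm
    _ = ∑ s ∈ p.support, d • monomial s (MvPolynomial.coeff s p) := by
        refine Finset.sum_congr rfl fun s hs => ?_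
        rw [Finset.sum_congr rfl fun u _ => aux_X_mul_pderiv_monomial s _ u, ← Finset.sum_smul]
        congr 1
        calc ∑ u : σ, s u = ∑ u ∈ s.support, s u :=
              (Finset.sum_subset (Finset.subset_univ _)
                fun x _ hx => Finsupp.notMem_support_iff.mp hx).symm
          _ = d := by
              simpa [Finsupp.weight_apply, Finsupp.sum] using hp (mem_support_iff.mp hs)
    _ = d • p := by rw [← Finset.smul_sum, ← p.as_sum]

lemma aux_isHomogeneous_pderiv {p : MvPolynomial σ ℝ} {n d : ℕ}
    (hp : p.IsHomogeneous n) (hd : n = d + 1) (i : σ) : (pderiv i p).IsHomogeneous d := by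
  classical
  subst hd
  have hrw : pderiv i p =
      ∑ s ∈ p.support, monomial (s - Finsupp.single i 1) (MvPolynomial.coeff s p * s i) := by
    conv_lhs => rw [p.as_sum]
    rw [map_sum]
    exact Finset.sum_congr rfl fun s _ => pderiv_monomial
  rw [hrw]
  refine MvPolynomial.IsHomogeneous.sum _ _ _ fun s hs => ?_
  by_cases h : s i = 0
  · simp only [h, Nat.cast_zero, mul_zero, monomial_zero]
    exact isHomogeneous_zero _ _ _
  · apply isHomogeneous_monomial
    have hle : Finsupp.single i 1 ≤ s := Finsupp.single_le_iff.mpr (by omega)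
    have hadd : Finsupp.single i 1 + (s - Finsupp.single i 1) = s := add_tsub_cancel_of_le hle
    have h1 : Finsupp.weight (1 : σ → ℕ) (Finsupp.single i 1)
        + Finsupp.weight (1 : σ → ℕ) (s - Finsupp.single i 1) = d + 1 := by
      rw [← map_add, hadd]
      exact hp (mem_support_iff.mp hs)
    have h2 : Finsupp.weight (1 : σ → ℕ) (Finsupp.single i 1) = 1 := by
      simp [Finsupp.weight_apply, Finsupp.sum_single_index]
    have h3 : Finsupp.degree (s - Finsupp.single i 1)
        = Finsupp.weight (1 : σ → ℕ) (s - Finsupp.single i 1) :=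
      DFunLike.congr_fun Finsupp.degree_eq_weight_one _
    omega

lemma aux_eq_C {p : MvPolynomial σ ℝ} (hp : p.IsHomogeneous 0) :
    p = MvPolynomial.C (MvPolynomial.coeff 0 p) := by
  classical
  ext d
  by_cases hd : d = 0
  · subst hd; simp
  · have hzero : MvPolynomial.coeff d p = 0 := by
      by_contra hc
      have hw := hp hc
      have h3 : Finsupp.degree d = Finsupp.weight (1 : σ → ℕ) d :=
        DFunLike.congr_fun Finsupp.degree_eq_weight_one _
      have : Finsupp.degree d = 0 := by omega
      exact hd ((Finsupp.degree_eq_zero_iff d).mp this)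
    simp [coeff_C, hd, hzero, Ne.symm hd]

end AuxLemmas

/-- The type of multi-indices `J : Fin m → ℕ` of length `k`. -/
abbrev MultiIndexLen (m k : ℕ) : Type := {J : Fin m → ℕ // ∑ i, J i = k}

instance MultiIndexLen.finite (m k : ℕ) : Finite (MultiIndexLen m k) :=
  Finite.of_injective
    (fun J => (fun i => (⟨J.1 i,
        Nat.lt_succ_of_le (le_trans
          (Finset.single_le_sum (fun j _ => Nat.zero_le (J.1 j)) (Finset.mem_univ i))
          (le_of_eq J.2))⟩ : Fin (k + 1))))
    (fun _ _ h => Subtype.ext (funext fun i => congrArg Fin.val (congrFun h i)))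

noncomputable instance MultiIndexLen.fintype (m k : ℕ) : Fintype (MultiIndexLen m k) :=
  Fintype.ofFinite _

lemma aux_mem_setS {m n k : ℕ} (α β : Fin n) (J K J₀ K₀ : MultiIndexLen m k)
    (h : J.1 + K.1 = J₀.1 + K₀.1) :
    (X (α, J) * X (β, K) - X (α, J₀) * X (β, K₀) : MvPolynomial (Fin n × MultiIndexLen m k) ℝ)
      ∈ { P : MvPolynomial (Fin n × MultiIndexLen m k) ℝ |
      ∃ (α β : Fin n) (I₁ I₂ 𝒥₁ 𝒥₂ : Fin m → ℕ)
        (hI : ∑ i, I₁ i = ∑ i, I₂ i) (h𝒥 : ∑ i, 𝒥₁ i = ∑ i, 𝒥₂ i)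
        (hIJ : (∑ i, I₁ i) + ∑ i, 𝒥₁ i = k),
        P = MvPolynomial.X (α, ⟨I₁ + 𝒥₁, by
                simp only [Pi.add_apply, Finset.sum_add_distrib]; omega⟩) *
              MvPolynomial.X (β, ⟨I₂ + 𝒥₂, by
                simp only [Pi.add_apply, Finset.sum_add_distrib]; omega⟩) -
            MvPolynomial.X (α, ⟨I₁ + 𝒥₂, by
                simp only [Pi.add_apply, Finset.sum_add_distrib]; omega⟩) *
              MvPolynomial.X (β, ⟨I₂ + 𝒥₁, by
                simp only [Pi.add_apply, Finset.sum_add_distrib]; omega⟩) } := by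
  have hpt : ∀ i, J.1 i + K.1 i = J₀.1 i + K₀.1 i := fun i => congrFun h i
  set I₁ : Fin m → ℕ := fun i => min (J.1 i) (J₀.1 i) with hI₁
  set 𝒥₁ : Fin m → ℕ := fun i => J.1 i - I₁ i with h𝒥₁
  set 𝒥₂ : Fin m → ℕ := fun i => J₀.1 i - I₁ i with h𝒥₂
  set I₂ : Fin m → ℕ := fun i => K.1 i - 𝒥₂ i with hI₂
  have e1 : ∀ i, I₁ i + 𝒥₁ i = J.1 i := fun i => by
    simp only [hI₁, h𝒥₁]; omega
  have e2 : ∀ i, I₁ i + 𝒥₂ i = J₀.1 i := fun i => by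
    simp only [hI₁, h𝒥₂]; omega
  have e3 : ∀ i, I₂ i + 𝒥₂ i = K.1 i := fun i => by
    have := hpt i; simp only [hI₁, h𝒥₂, hI₂]; omega
  have e4 : ∀ i, I₂ i + 𝒥₁ i = K₀.1 i := fun i => by
    have := hpt i; simp only [hI₁, h𝒥₁, h𝒥₂, hI₂]; omega
  have s1 : (∑ i, I₁ i) + ∑ i, 𝒥₁ i = k := by
    rw [← Finset.sum_add_distrib]
    simp only [e1]; exact J.2
  have s2 : (∑ i, I₁ i) + ∑ i, 𝒥₂ i = k := by
    rw [← Finset.sum_add_distrib]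
    simp only [e2]; exact J₀.2
  have s3 : (∑ i, I₂ i) + ∑ i, 𝒥₂ i = k := by
    rw [← Finset.sum_add_distrib]
    simp only [e3]; exact K.2
  refine ⟨α, β, I₁, I₂, 𝒥₁, 𝒥₂, by omega, by omega, s1, ?_⟩
  have E1 : ∀ (hp : ∑ i, (I₁ + 𝒥₁) i = k), (⟨I₁ + 𝒥₁, hp⟩ : MultiIndexLen m k) = J :=
    fun hp => Subtype.ext (funext fun i => e1 i)
  have E2 : ∀ (hp : ∑ i, (I₂ + 𝒥₂) i = k), (⟨I₂ + 𝒥₂, hp⟩ : MultiIndexLen m k) = K :=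
    fun hp => Subtype.ext (funext fun i => e3 i)
  have E3 : ∀ (hp : ∑ i, (I₁ + 𝒥₂) i = k), (⟨I₁ + 𝒥₂, hp⟩ : MultiIndexLen m k) = J₀ :=
    fun hp => Subtype.ext (funext fun i => e2 i)
  have E4 : ∀ (hp : ∑ i, (I₂ + 𝒥₁) i = k), (⟨I₂ + 𝒥₁, hp⟩ : MultiIndexLen m k) = K₀ :=
    fun hp => Subtype.ext (funext fun i => e4 i)
  rw [E1, E2, E3, E4]

/-- Proposition 6.1: a quadratic homogeneous polynomial `Q` in the highest-order variables
satisfying the projectability condition (6) is a real linear combination of the 2×2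
hyperaffine determinants
`X_{(α, I₁+𝒥₁)} X_{(β, I₂+𝒥₂)} − X_{(α, I₁+𝒥₂)} X_{(β, I₂+𝒥₁)}`
with `|I₁| = |I₂|`, `|𝒥₁| = |𝒥₂|` and `|I₁| + |𝒥₁| = k`. -/
theorem quadratic_component_hyperaffine (m n k : ℕ) (hm : 1 ≤ m) (hn : 1 ≤ n) (hk : 1 ≤ k)
    (Q : MvPolynomial (Fin n × MultiIndexLen m k) ℝ)
    (hQ : Q.IsHomogeneous 2)
    (hproj : ∀ (α β : Fin n) (H : Fin m → ℕ), (∑ i, H i = 2 * k) →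
      ∑ p ∈ Finset.univ.filter
          (fun p : MultiIndexLen m k × MultiIndexLen m k => p.1.1 + p.2.1 = H),
        MvPolynomial.pderiv (α, p.1) (MvPolynomial.pderiv (β, p.2) Q) = 0) :
    Q ∈ Submodule.span ℝ { P : MvPolynomial (Fin n × MultiIndexLen m k) ℝ |
      ∃ (α β : Fin n) (I₁ I₂ 𝒥₁ 𝒥₂ : Fin m → ℕ)
        (hI : ∑ i, I₁ i = ∑ i, I₂ i) (h𝒥 : ∑ i, 𝒥₁ i = ∑ i, 𝒥₂ i)
        (hIJ : (∑ i, I₁ i) + ∑ i, 𝒥₁ i = k),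
        P = MvPolynomial.X (α, ⟨I₁ + 𝒥₁, by
                simp only [Pi.add_apply, Finset.sum_add_distrib]; omega⟩) *
              MvPolynomial.X (β, ⟨I₂ + 𝒥₂, by
                simp only [Pi.add_apply, Finset.sum_add_distrib]; omega⟩) -
            MvPolynomial.X (α, ⟨I₁ + 𝒥₂, by
                simp only [Pi.add_apply, Finset.sum_add_distrib]; omega⟩) *
              MvPolynomial.X (β, ⟨I₂ + 𝒥₁, by
                simp only [Pi.add_apply, Finset.sum_add_distrib]; omega⟩) } := by
  have hQ1 : ∀ v, (MvPolynomial.pderiv v Q).IsHomogeneous 1 :=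
    fun v => aux_isHomogeneous_pderiv hQ (by norm_num) v
  have hQ0 : ∀ u v, (MvPolynomial.pderiv u (MvPolynomial.pderiv v Q)).IsHomogeneous 0 :=
    fun u v => aux_isHomogeneous_pderiv (hQ1 v) (by norm_num) u
  have key : (2 : ℕ) • Q = ∑ v : Fin n × MultiIndexLen m k, ∑ u : Fin n × MultiIndexLen m k,
      X v * (X u * pderiv u (pderiv v Q)) := by
    rw [← aux_euler hQ]
    refine Finset.sum_congr rfl fun v _ => ?_
    rw [← Finset.mul_sum, aux_euler (hQ1 v), one_smul]
  have hQeq : Q = (2 : ℝ)⁻¹ • ∑ v : Fin n × MultiIndexLen m k,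
      ∑ u : Fin n × MultiIndexLen m k, X v * (X u * pderiv u (pderiv v Q)) := by
    rw [← key, ← Nat.cast_smul_eq_nsmul ℝ, smul_smul]
    norm_num
  rw [hQeq]
  refine Submodule.smul_mem _ _ ?_
  have hre : (∑ v : Fin n × MultiIndexLen m k, ∑ u : Fin n × MultiIndexLen m k,
        X v * (X u * pderiv u (pderiv v Q)))
      = ∑ β : Fin n, ∑ α : Fin n, ∑ p : MultiIndexLen m k × MultiIndexLen m k,
          pderiv (α, p.1) (pderiv (β, p.2) Q) * (X (α, p.1) * X (β, p.2)) := by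
    rw [Fintype.sum_prod_type]
    refine Finset.sum_congr rfl fun β _ => ?_
    calc ∑ K : MultiIndexLen m k, ∑ u : Fin n × MultiIndexLen m k,
          X (β, K) * (X u * pderiv u (pderiv (β, K) Q))
        = ∑ K : MultiIndexLen m k, ∑ α : Fin n, ∑ J : MultiIndexLen m k,
            X (β, K) * (X (α, J) * pderiv (α, J) (pderiv (β, K) Q)) :=
          Finset.sum_congr rfl fun K _ => Fintype.sum_prod_type _
      _ = ∑ α : Fin n, ∑ K : MultiIndexLen m k, ∑ J : MultiIndexLen m k,
            X (β, K) * (X (α, J) * pderiv (α, J) (pderiv (β, K) Q)) := Finset.sum_comm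
      _ = ∑ α : Fin n, ∑ J : MultiIndexLen m k, ∑ K : MultiIndexLen m k,
            X (β, K) * (X (α, J) * pderiv (α, J) (pderiv (β, K) Q)) :=
          Finset.sum_congr rfl fun α _ => Finset.sum_comm
      _ = ∑ α : Fin n, ∑ J : MultiIndexLen m k, ∑ K : MultiIndexLen m k,
            pderiv (α, J) (pderiv (β, K) Q) * (X (α, J) * X (β, K)) :=
          Finset.sum_congr rfl fun α _ => Finset.sum_congr rfl fun J _ =>
            Finset.sum_congr rfl fun K _ => by ring
      _ = ∑ α : Fin n, ∑ p : MultiIndexLen m k × MultiIndexLen m k,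
            pderiv (α, p.1) (pderiv (β, p.2) Q) * (X (α, p.1) * X (β, p.2)) :=
          Finset.sum_congr rfl fun α _ => by rw [Fintype.sum_prod_type]
  rw [hre]
  refine Submodule.sum_mem _ fun β _ => Submodule.sum_mem _ fun α _ => ?_
  have hfib :
      ∑ H ∈ Finset.univ.image (fun p : MultiIndexLen m k × MultiIndexLen m k => p.1.1 + p.2.1),
        ∑ p ∈ Finset.univ.filter
          (fun p : MultiIndexLen m k × MultiIndexLen m k => p.1.1 + p.2.1 = H),
          pderiv (α, p.1) (pderiv (β, p.2) Q) * (X (α, p.1) * X (β, p.2))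
      = ∑ p : MultiIndexLen m k × MultiIndexLen m k,
          pderiv (α, p.1) (pderiv (β, p.2) Q) * (X (α, p.1) * X (β, p.2)) :=
    Finset.sum_fiberwise_of_maps_to (fun p _ => Finset.mem_image_of_mem _ (Finset.mem_univ p)) _
  rw [← hfib]
  refine Submodule.sum_mem _ fun H hH => ?_
  obtain ⟨p₀, -, hp₀⟩ := Finset.mem_image.mp hH
  have hH2k : ∑ i, H i = 2 * k := by
    rw [← hp₀]
    simp only [Pi.add_apply, Finset.sum_add_distrib, p₀.1.2, p₀.2.2]
    ring
  have hsum0 : ∑ p ∈ Finset.univ.filter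
      (fun p : MultiIndexLen m k × MultiIndexLen m k => p.1.1 + p.2.1 = H),
      pderiv (α, p.1) (pderiv (β, p.2) Q) = 0 := hproj α β H hH2k
  have hsplit : ∑ p ∈ Finset.univ.filter
        (fun p : MultiIndexLen m k × MultiIndexLen m k => p.1.1 + p.2.1 = H),
        pderiv (α, p.1) (pderiv (β, p.2) Q) * (X (α, p.1) * X (β, p.2))
      = ∑ p ∈ Finset.univ.filter
          (fun p : MultiIndexLen m k × MultiIndexLen m k => p.1.1 + p.2.1 = H),
          pderiv (α, p.1) (pderiv (β, p.2) Q)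
            * (X (α, p.1) * X (β, p.2) - X (α, p₀.1) * X (β, p₀.2)) := by
    simp only [mul_sub]
    rw [Finset.sum_sub_distrib, ← Finset.sum_mul, hsum0, zero_mul, sub_zero]
  rw [hsplit]
  refine Submodule.sum_mem _ fun p hp => ?_
  have hcond : p.1.1 + p.2.1 = p₀.1.1 + p₀.2.1 := by
    rw [(Finset.mem_filter.mp hp).2, hp₀]
  rw [aux_eq_C (hQ0 (α, p.1) (β, p.2)), MvPolynomial.C_mul']
  exact Submodule.smul_mem _ _
    (Submodule.subset_span (aux_mem_setS α β p.1 p.2 p₀.1 p₀.2 hcond))
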